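/- For a coalition game ν : Finset(Fin d) → ℝ with d players, the Shapley values satisfy the efficiency axiom: the sum over all players i of φ_i(ν) equals ν(univ) − ν(∅), where φ_i(ν) = (1/d) · Σ_{S ⊆ univ \ {i}} (choose (d−1) |S|)⁻¹ · (ν(S ∪ {i}) − ν(S)). -/

import Mathlib

open Finset

theorem shapley_efficiency (d : ℕ) (hd : 1 ≤ d) (ν : Finset (Fin d) → ℝ) :
    ∑ i : Fin d, ((1 / d : ℝ) *
      ∑ S ∈ (Finset.univ.erase i).powerset,
        ((Nat.choose (d - 1) S.card : ℝ))⁻¹ * (ν (insert i S) - ν S)) =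
    ν Finset.univ - ν ∅ := by
  classical
  have hd0 : (d : ℝ) ≠ 0 := Nat.cast_ne_zero.mpr (by omega)
  set c : ℕ → ℝ := fun k => ((Nat.choose (d - 1) k : ℝ))⁻¹ with hc
  rw [← Finset.mul_sum]
  have hpow : ∀ i : Fin d, (Finset.univ.erase i).powerset
      = (Finset.univ : Finset (Fin d)).powerset.filter (fun S => i ∉ S) := by
    intro i; ext S; simp [Finset.subset_erase]
  have h1 : ∀ i : Fin d,
      ∑ S ∈ (Finset.univ.erase i).powerset, c S.card * (ν (insert i S) - ν S)
      = ∑ T ∈ (Finset.univ : Finset (Fin d)).powerset,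
          ((if i ∈ T then c (T.card - 1) * ν T else 0)
            - (if i ∉ T then c T.card * ν T else 0)) := by
    intro i
    simp only [mul_sub]
    rw [Finset.sum_sub_distrib, Finset.sum_sub_distrib]
    congr 1
    · rw [← Finset.sum_filter]
      refine Finset.sum_nbij' (fun S => insert i S) (fun T => T.erase i) ?_ ?_ ?_ ?_ ?_
      · intro S hS
        simp only [Finset.mem_powerset, hpow i, Finset.mem_filter] at hS
        simp [Finset.mem_filter, Finset.mem_powerset]
      · intro T hT
        simp only [Finset.mem_filter, Finset.mem_powerset] at hT
        simp [hpow i, Finset.mem_filter, Finset.mem_powerset]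
      · intro S hS
        simp only [Finset.mem_powerset, hpow i, Finset.mem_filter] at hS
        exact Finset.erase_insert hS.2
      · intro T hT
        simp only [Finset.mem_filter, Finset.mem_powerset] at hT
        exact Finset.insert_erase hT.2
      · intro S hS
        simp only [Finset.mem_powerset, hpow i, Finset.mem_filter, Finset.mem_powerset] at hS
        rw [Finset.card_insert_of_notMem hS.2]
        simp
    · rw [← Finset.sum_filter, hpow i]
  rw [Finset.sum_congr rfl (fun i _ => h1 i), Finset.sum_comm]
  have h2 : ∀ T ∈ (Finset.univ : Finset (Fin d)).powerset,
      (∑ i : Fin d, ((if i ∈ T then c (T.card - 1) * ν T else 0)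
          - (if i ∉ T then c T.card * ν T else 0)))
      = (T.card : ℝ) * (c (T.card - 1) * ν T)
        - ((d - T.card : ℕ) : ℝ) * (c T.card * ν T) := by
    intro T _
    rw [Finset.sum_sub_distrib]
    congr 1
    · rw [Finset.sum_ite_mem, Finset.univ_inter, Finset.sum_const, nsmul_eq_mul]
    · have : ∀ i : Fin d, (if i ∉ T then c T.card * ν T else 0)
          = if i ∈ Finset.univ \ T then c T.card * ν T else 0 := by
        intro i; simp
      simp only [this]
      rw [Finset.sum_ite_mem, Finset.univ_inter, Finset.sum_const, nsmul_eq_mul,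
        Finset.card_sdiff_of_subset (Finset.subset_univ T), Finset.card_univ, Fintype.card_fin]
  rw [Finset.sum_congr rfl h2]
  -- now only ∅ and univ contribute
  have hne : (∅ : Finset (Fin d)) ≠ Finset.univ := by
    have : (0:ℕ) < d := hd
    intro h
    have := Finset.card_univ (α := Fin d)
    rw [← h] at this
    simp [Fintype.card_fin] at this
    omega
  have hsub : ({∅, Finset.univ} : Finset (Finset (Fin d))) ⊆ Finset.univ.powerset := by
    intro T hT
    simp only [Finset.mem_insert, Finset.mem_singleton] at hT
    rcases hT with h | h <;> simp [h]
  rw [← Finset.sum_subset hsub ?_]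
  · rw [Finset.sum_pair hne]
    have hcard : (Finset.univ : Finset (Fin d)).card = d := by
      rw [Finset.card_univ, Fintype.card_fin]
    have hc0 : c 0 = 1 := by simp [hc]
    have hcd : c (d - 1) = 1 := by simp [hc]
    rw [Finset.card_empty, hcard]
    simp only [Nat.cast_zero, Nat.sub_zero, Nat.sub_self, hc0, hcd, Nat.cast_zero]
    field_simp
    ring
  · intro T hT hT2
    simp only [Finset.mem_insert, Finset.mem_singleton, not_or] at hT2
    obtain ⟨hT0, hTu⟩ := hT2
    have htpos : 1 ≤ T.card := Finset.card_pos.mpr (Finset.nonempty_of_ne_empty hT0)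
    have htlt : T.card < d := by
      have := Finset.card_lt_card (Finset.ssubset_univ_iff.mpr hTu)
      rwa [Finset.card_univ, Fintype.card_fin] at this
    have hch1 : 0 < Nat.choose (d - 1) (T.card - 1) := Nat.choose_pos (by omega)
    have hch2 : 0 < Nat.choose (d - 1) T.card := Nat.choose_pos (by omega)
    have hnat : Nat.choose (d - 1) T.card * T.card
        = Nat.choose (d - 1) (T.card - 1) * (d - T.card) := by
      have := Nat.choose_succ_right_eq (d - 1) (T.card - 1)
      have ht : T.card - 1 + 1 = T.card := by omega
      have hdt : d - 1 - (T.card - 1) = d - T.card := by omega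
      rw [ht, hdt] at this
      exact this
    have key : (T.card : ℝ) * c (T.card - 1) = ((d - T.card : ℕ) : ℝ) * c T.card := by
      have e1 : ((Nat.choose (d - 1) (T.card - 1) : ℝ)) ≠ 0 := Nat.cast_ne_zero.mpr hch1.ne'
      have e2 : ((Nat.choose (d - 1) T.card : ℝ)) ≠ 0 := Nat.cast_ne_zero.mpr hch2.ne'
      simp only [hc]
      field_simp
      exact_mod_cast (by rw [Nat.mul_comm, hnat] :
        T.card * Nat.choose (d - 1) T.card = Nat.choose (d - 1) (T.card - 1) * (d - T.card))
    rw [← mul_assoc, ← mul_assoc, key, sub_self]
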